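/- Let f : F₁ → E₁ be a continuous linear map between Hausdorff locally convex spaces over ℝ and let E₂ be any Hausdorff locally convex space over ℝ. Then the transpose f^t : (E₁)'_c → (F₁)'_c, x' ↦ x' ∘ f, is continuous, and the induced map f ε Id : F₁ ε E₂ → E₁ ε E₂, u ↦ u ∘ f^t, is linear and continuous. If moreover f is injective, then f ε Id is injective. -/

import Mathlib

open Filter Topology Set Bornology Pointwise

/-- A sequence in a locally convex space is *Mackey-Cauchy* if there are a bounded
absolutely convex set `B` and a double sequence of nonnegative reals `c` tending to `0`
such that `x n - x m ∈ c n m • B` for all `n, m`. -/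
def MackeyCauchy (E : Type*) [AddCommGroup E] [Module ℝ E] [TopologicalSpace E]
    (x : ℕ → E) : Prop :=
  ∃ (B : Set E) (c : ℕ → ℕ → ℝ),
    IsVonNBounded ℝ B ∧ Convex ℝ B ∧ Balanced ℝ B ∧
    (∀ n m, 0 ≤ c n m) ∧
    Tendsto (fun p : ℕ × ℕ => c p.1 p.2) atTop (𝓝 (0 : ℝ)) ∧
    ∀ n m, x n - x m ∈ c n m • B

/-- A locally convex space is *Mackey-complete* if every Mackey-Cauchy sequence converges. -/
def MackeyComplete (E : Type*) [AddCommGroup E] [Module ℝ E] [TopologicalSpace E] : Prop :=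
  ∀ x : ℕ → E, MackeyCauchy E x → ∃ l : E, Tendsto x atTop (𝓝 l)

/-- A locally convex space is *k-quasi-complete* if the closed absolutely convex hull of
every compact set is compact. -/
def KQuasiComplete (E : Type*) [AddCommGroup E] [Module ℝ E] [TopologicalSpace E] : Prop :=
  ∀ K : Set E, IsCompact K → IsCompact (closure (convexHull ℝ (balancedHull ℝ K)))

variable (E : Type*) [AddCommGroup E] [Module ℝ E] [TopologicalSpace E]

/-- The Arens dual `E'_c`: the topological dual with the topology of uniform convergence on
absolutely convex compact subsets of `E`. -/
abbrev ArensDual : Type _ :=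
  UniformConvergenceCLM (RingHom.id ℝ) ℝ {K : Set E | Convex ℝ K ∧ Balanced ℝ K ∧ IsCompact K}

/-- The Mackey dual `E'_μ`: the topological dual with the topology of uniform convergence on
absolutely convex weakly compact subsets of `E`. -/
abbrev MackeyDual : Type _ :=
  UniformConvergenceCLM (RingHom.id ℝ) ℝ
    {K : Set E | Convex ℝ K ∧ Balanced ℝ K ∧ IsCompact (⇑(toWeakSpace ℝ E) '' K)}

/-- The Schwartz ε-product `E ε F`: continuous linear maps from the Arens dual `E'_c` to `F`,
with the topology of uniform convergence on equicontinuous subsets of `E'`. -/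
abbrev EpsProduct (F : Type*) [AddCommGroup F] [Module ℝ F] [TopologicalSpace F]
    [IsTopologicalAddGroup F] : Type _ :=
  UniformConvergenceCLM (RingHom.id ℝ) F
    {H : Set (ArensDual E) | Equicontinuous fun f : H => (f.1 : E → ℝ)}

/-- The η-product `E η F`: continuous linear maps from the Mackey dual `E'_μ` to `F`,
with the topology of uniform convergence on equicontinuous subsets of `E'`. -/
abbrev EtaProduct (F : Type*) [AddCommGroup F] [Module ℝ F] [TopologicalSpace F]
    [IsTopologicalAddGroup F] : Type _ :=
  UniformConvergenceCLM (RingHom.id ℝ) F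
    {H : Set (MackeyDual E) | Equicontinuous fun f : H => (f.1 : E → ℝ)}


/-! ### Auxiliary results -/

section AuxCompact

variable {G : Type*} [AddCommGroup G] [Module ℝ G] [TopologicalSpace G]
  [IsTopologicalAddGroup G] [ContinuousSMul ℝ G]

theorem isCompact_convexJoin_aux {s t : Set G} (hs : IsCompact s) (ht : IsCompact t) :
    IsCompact (convexJoin ℝ s t) := by
  have h : convexJoin ℝ s t =
      (fun p : (ℝ × G) × G => (1 - p.1.1) • p.1.2 + p.1.1 • p.2) ''
        ((Set.Icc (0:ℝ) 1 ×ˢ s) ×ˢ t) := by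
    ext x
    constructor
    · intro hx
      rw [mem_convexJoin] at hx
      obtain ⟨a, ha, b, hb, hab⟩ := hx
      rw [segment_eq_image ℝ] at hab
      obtain ⟨θ, hθ, rfl⟩ := hab
      exact ⟨((θ, a), b), ⟨⟨hθ, ha⟩, hb⟩, rfl⟩
    · rintro ⟨⟨⟨θ, a⟩, b⟩, ⟨⟨hθ, ha⟩, hb⟩, rfl⟩
      rw [mem_convexJoin]
      exact ⟨a, ha, b, hb, (segment_eq_image ℝ a b) ▸ ⟨θ, hθ, rfl⟩⟩
  rw [h]
  apply ((isCompact_Icc.prod hs).prod ht).image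
  fun_prop

theorem arens_directed_aux :
    DirectedOn (· ⊆ ·) {K : Set G | Convex ℝ K ∧ Balanced ℝ K ∧ IsCompact K} := by
  rintro K₁ ⟨h₁c, h₁b, h₁k⟩ K₂ ⟨h₂c, h₂b, h₂k⟩
  rcases K₁.eq_empty_or_nonempty with rfl | h₁n
  · exact ⟨K₂, ⟨h₂c, h₂b, h₂k⟩, Set.empty_subset _, subset_rfl⟩
  rcases K₂.eq_empty_or_nonempty with rfl | h₂n
  · exact ⟨K₁, ⟨h₁c, h₁b, h₁k⟩, subset_rfl, Set.empty_subset _⟩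
  refine ⟨convexHull ℝ (K₁ ∪ K₂), ⟨convex_convexHull _ _, (h₁b.union h₂b).convexHull, ?_⟩,
    Set.subset_union_left.trans (subset_convexHull _ _),
    Set.subset_union_right.trans (subset_convexHull _ _)⟩
  rw [h₁c.convexHull_union h₂c h₁n h₂n]
  exact isCompact_convexJoin_aux h₁k h₂k

end AuxCompact

section Precomp

variable {X Y Z : Type*} [AddCommGroup X] [Module ℝ X] [TopologicalSpace X]
    [AddCommGroup Y] [Module ℝ Y] [TopologicalSpace Y]
    [AddCommGroup Z] [Module ℝ Z] [TopologicalSpace Z] [IsTopologicalAddGroup Z]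
    [ContinuousConstSMul ℝ Z]

/-- Precomposition with a fixed continuous linear map, as a continuous linear map between
spaces of continuous linear maps with topologies of uniform convergence. -/
noncomputable def precompCLM (𝔖X : Set (Set X)) (𝔖Y : Set (Set Y)) (L : Y →L[ℝ] X)
    (hL : ∀ S ∈ 𝔖Y, L '' S ∈ 𝔖X) :
    UniformConvergenceCLM (RingHom.id ℝ) Z 𝔖X →L[ℝ] UniformConvergenceCLM (RingHom.id ℝ) Z 𝔖Y where
  toFun f := f.comp L
  map_add' f g := ContinuousLinearMap.add_comp f g L
  map_smul' a f := ContinuousLinearMap.smul_comp a f L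
  cont := by
    letI : UniformSpace Z := IsTopologicalAddGroup.rightUniformSpace Z
    haveI : IsUniformAddGroup Z := isUniformAddGroup_of_addCommGroup
    apply (UniformConvergenceCLM.isEmbedding_coeFn (RingHom.id ℝ) Z 𝔖Y).continuous_iff.2
    change Continuous ((fun f ↦ UniformOnFun.ofFun 𝔖Y (f ∘ L)) ∘
      (DFunLike.coe : UniformConvergenceCLM (RingHom.id ℝ) Z 𝔖X → (X → Z)))
    exact (UniformOnFun.precomp_uniformContinuous hL).continuous.comp
      (UniformConvergenceCLM.isEmbedding_coeFn (RingHom.id ℝ) Z 𝔖X).continuous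

@[simp] theorem precompCLM_apply (𝔖X : Set (Set X)) (𝔖Y : Set (Set Y)) (L : Y →L[ℝ] X)
    (hL : ∀ S ∈ 𝔖Y, L '' S ∈ 𝔖X) (u : UniformConvergenceCLM (RingHom.id ℝ) Z 𝔖X) (x : Y) :
    precompCLM 𝔖X 𝔖Y L hL u x = u (L x) := rfl

end Precomp

section Key

variable {F : Type*} [AddCommGroup F] [Module ℝ F] [TopologicalSpace F] [IsTopologicalAddGroup F]
  [ContinuousSMul ℝ F] [LocallyConvexSpace ℝ F]

/-- The identity bilinear pairing between the algebraic dual of the Arens dual and the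
Arens dual, used to put the weak topology on the algebraic dual. -/
noncomputable def Bw : ((ArensDual F) →ₗ[ℝ] ℝ) →ₗ[ℝ] (ArensDual F) →ₗ[ℝ] ℝ := LinearMap.id

omit [IsTopologicalAddGroup F] [ContinuousSMul ℝ F] [LocallyConvexSpace ℝ F] in
/-- Every continuous linear functional on the algebraic dual of the Arens dual equipped with
the weak-* topology is an evaluation. -/
theorem weak_dual_eval (ψ : WeakBilin (Bw (F := F)) →L[ℝ] ℝ) :
    ∃ w₀ : ArensDual F, ∀ d : (ArensDual F) →ₗ[ℝ] ℝ, ψ d = d w₀ := by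
  classical
  have hmem : ψ ⁻¹' Metric.ball 0 1 ∈ 𝓝 (0 : WeakBilin (Bw (F := F))) := by
    have h := ψ.continuous.tendsto 0
    rw [map_zero] at h
    exact h (Metric.ball_mem_nhds 0 one_pos)
  obtain ⟨U, hU, hUsub⟩ := (LinearMap.hasBasis_weakBilin (Bw (F := F))).mem_iff.1 hmem
  obtain ⟨s, r, hr, rfl⟩ := (SeminormFamily.basisSets_iff _).1 hU
  let L : s → ((ArensDual F) →ₗ[ℝ] ℝ) →ₗ[ℝ] ℝ := fun w =>
    { toFun := fun d => d w.1
      map_add' := fun _ _ => rfl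
      map_smul' := fun _ _ => rfl }
  have hker : (⨅ w : s, LinearMap.ker (L w)) ≤
      LinearMap.ker (ψ : WeakBilin (Bw (F := F)) →ₗ[ℝ] ℝ) := by
    intro d hd
    simp only [Submodule.mem_iInf, LinearMap.mem_ker] at hd ⊢
    have key : ∀ t : ℝ, 0 < t → |ψ (t • d)| < 1 := by
      intro t ht
      have hdball : (t • d) ∈ (s.sup ((Bw (F := F)).toSeminormFamily)).ball 0 r := by
        rw [Seminorm.mem_ball_zero]
        apply Seminorm.finset_sup_apply_lt hr
        intro w hw
        have h0 : d w = 0 := hd ⟨w, hw⟩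
        simp only [LinearMap.toSeminormFamily_apply]
        show ‖(t • d) w‖ < r
        have ht2 : (t • d) w = t * d w := rfl
        rw [ht2, h0, mul_zero, norm_zero]
        exact hr
      have := hUsub hdball
      change ψ (t • d) ∈ Metric.ball (0:ℝ) 1 at this
      rwa [Metric.mem_ball, dist_zero_right, Real.norm_eq_abs] at this
    by_contra hne
    have habs : 0 < |ψ d| := abs_pos.mpr hne
    have hk := key (2 / |ψ d|) (by positivity)
    rw [show ψ ((2 / |ψ d|) • d) = (2 / |ψ d|) • ψ d from ψ.map_smul _ _] at hk
    have h2 : |(2 / |ψ d|) • ψ d| = 2 := by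
      rw [smul_eq_mul, abs_mul, abs_div, abs_two, abs_abs, div_mul_eq_mul_div,
        mul_div_assoc, div_self (ne_of_gt habs), mul_one]
    rw [h2] at hk
    linarith
  have hspan := mem_span_of_iInf_ker_le_ker hker
  replace hspan := (Submodule.mem_span_range_iff_exists_fun ℝ).mp hspan
  obtain ⟨c, hc⟩ := hspan
  refine ⟨∑ w : s, c w • (w.1 : ArensDual F), fun d => ?_⟩
  have hthis := LinearMap.congr_fun hc d
  simp only [LinearMap.coe_sum, Finset.sum_apply, LinearMap.smul_apply] at hthis
  rw [show ψ d = ∑ x : s, c x • (L x) d from hthis.symm, map_sum]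
  congr 1
  ext w
  rw [map_smul]
  rfl

/-- The evaluation map from `F` into the algebraic dual of its Arens dual. -/
noncomputable def evF : F →ₗ[ℝ] ((ArensDual F) →ₗ[ℝ] ℝ) where
  toFun y :=
    { toFun := fun w => w y
      map_add' := fun _ _ => rfl
      map_smul' := fun _ _ => rfl }
  map_add' y₁ y₂ := by ext w; exact w.map_add y₁ y₂
  map_smul' c y := by ext w; exact w.map_smul c y

omit [LocallyConvexSpace ℝ F] in
/-- **Mackey–Arens (easy direction)**: every continuous linear functional on the Arens dual
is evaluation at a point of the original space. -/
theorem arensDual_dual_eval (φ : ArensDual F →L[ℝ] ℝ) :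
    ∃ y : F, ∀ w : ArensDual F, φ w = w y := by
  classical
  -- Step 1: get an absolutely convex compact `K` and `δ > 0` controlling `φ`.
  have hb := UniformConvergenceCLM.hasBasis_nhds_zero_of_basis (RingHom.id ℝ) ℝ
      {K : Set F | Convex ℝ K ∧ Balanced ℝ K ∧ IsCompact K}
      ⟨∅, convex_empty, balanced_empty, isCompact_empty⟩ arens_directed_aux
      (Metric.nhds_basis_closedBall (x := (0:ℝ)))
  have hmem : φ ⁻¹' (Metric.ball 0 1) ∈ 𝓝 (0 : ArensDual F) := by
    have h := φ.continuous.tendsto 0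
    rw [map_zero] at h
    exact h (Metric.ball_mem_nhds 0 one_pos)
  obtain ⟨⟨K, δ⟩, ⟨hK, hδ⟩, hsub⟩ := hb.mem_iff.1 hmem
  simp only [Set.mem_setOf_eq] at hK
  -- Step 2: enlarge `K` to contain `0`.
  set K₀ : Set F := K ∪ {0} with hK₀def
  have hK₀ : Convex ℝ K₀ ∧ Balanced ℝ K₀ ∧ IsCompact K₀ := by
    rcases K.eq_empty_or_nonempty with rfl | hKne
    · refine ⟨?_, ?_, ?_⟩ <;> simp only [hK₀def, Set.empty_union]
      · exact convex_singleton 0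
      · exact (balanced_zero : Balanced ℝ (0 : Set F))
      · exact isCompact_singleton
    · have h0K : (0:F) ∈ K := by
        obtain ⟨x, hx⟩ := hKne
        have h := hK.2.1 0 (by norm_num) (Set.smul_mem_smul_set hx)
        simpa using h
      have hE : K₀ = K := Set.union_eq_self_of_subset_right (by simpa using h0K)
      rw [hE]; exact hK
  have h0K₀ : (0:F) ∈ K₀ := Or.inr rfl
  -- Step 3: the quantitative bound.
  have hbound : ∀ (w : ArensDual F) (r : ℝ), 0 < r → (∀ x ∈ K₀, |w x| ≤ δ * r) → |φ w| ≤ r := by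
    intro w r hr hw
    have hmem2 : (r⁻¹ • w) ∈ {g : ArensDual F | ∀ x ∈ K, g x ∈ Metric.closedBall (0:ℝ) δ} := by
      intro x hx
      have h1 : |w x| ≤ δ * r := hw x (Or.inl hx)
      have h2 : (r⁻¹ • w) x = r⁻¹ * w x := rfl
      simp only [Metric.mem_closedBall, dist_zero_right, Real.norm_eq_abs, h2, abs_mul,
        abs_inv, abs_of_pos hr]
      rw [inv_mul_le_iff₀ hr, mul_comm]
      exact h1
    have h3 := hsub hmem2
    simp only [Set.mem_preimage, Metric.mem_ball, dist_zero_right, Real.norm_eq_abs] at h3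
    have h4 : φ (r⁻¹ • w) = r⁻¹ * φ w := by rw [map_smul]; rfl
    rw [h4, abs_mul, abs_inv, abs_of_pos hr, inv_mul_lt_iff₀ hr, mul_one] at h3
    exact le_of_lt h3
  -- Step 4: bipolar argument via Hahn–Banach separation in the weak-* topology.
  haveI : T2Space (WeakBilin (Bw (F := F))) :=
    (WeakBilin.isEmbedding (B := Bw (F := F)) Function.injective_id).t2Space
  let j : F → WeakBilin (Bw (F := F)) := fun y => evF y
  have hcont : Continuous j :=
    WeakBilin.continuous_of_continuous_eval _ (fun w => w.continuous)
  have hjcompact : IsCompact (j '' K₀) := hK₀.2.2.image hcont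
  have hjconvex : Convex ℝ (j '' K₀) :=
    hK₀.1.linear_image (evF : F →ₗ[ℝ] ((ArensDual F) →ₗ[ℝ] ℝ))
  have hφmem : (δ • (φ : (ArensDual F) →ₗ[ℝ] ℝ) : WeakBilin (Bw (F := F))) ∈ j '' K₀ := by
    by_contra hout
    obtain ⟨ψ, u, hψ, hu⟩ :=
      geometric_hahn_banach_closed_point hjconvex hjcompact.isClosed hout
    obtain ⟨w₀, hw₀⟩ := weak_dual_eval ψ
    have h0 : (0 : WeakBilin (Bw (F := F))) ∈ j '' K₀ := by
      refine ⟨0, h0K₀, ?_⟩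
      show evF (0:F) = 0
      simp only [map_zero]
    have hupos : 0 < u := by
      have := hψ _ h0
      rwa [map_zero] at this
    have habs : ∀ x ∈ K₀, |w₀ x| ≤ u := by
      intro x hx
      have h1 : w₀ x < u := by
        have := hψ _ ⟨x, hx, rfl⟩
        rwa [hw₀] at this
      have h2 : -(w₀ x) < u := by
        have hnx : -x ∈ K₀ := by
          have := hK₀.2.1 (-1 : ℝ) (by norm_num) (Set.smul_mem_smul_set hx)
          simpa using this
        have h4 := hψ _ ⟨-x, hnx, rfl⟩
        rw [hw₀] at h4
        calc -(w₀ x) = w₀ (-x) := (map_neg w₀ x).symm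
        _ < u := h4
      rw [abs_le]
      constructor <;> linarith
    have hb2 : |φ w₀| ≤ u / δ := by
      apply hbound w₀ (u / δ) (by positivity)
      intro x hx
      rw [mul_div_cancel₀ _ (ne_of_gt hδ)]
      exact habs x hx
    have hgt : u < δ * φ w₀ := by
      have := hu
      rw [hw₀] at this
      simpa using this
    have hlt : u / δ < φ w₀ := by
      rw [div_lt_iff₀ hδ]
      linarith [hgt]
    have : φ w₀ ≤ u / δ := le_trans (le_abs_self _) hb2
    linarith
  obtain ⟨y, hyK, hy⟩ := hφmem
  refine ⟨δ⁻¹ • y, fun w => ?_⟩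
  have h1 : w y = δ * φ w := by
    have := LinearMap.congr_fun hy w
    exact this
  have h2 : w (δ⁻¹ • y) = δ⁻¹ * w y := w.map_smul δ⁻¹ y
  rw [h2, h1, ← mul_assoc, inv_mul_cancel₀ (ne_of_gt hδ), one_mul]

end Key

/-- For a continuous linear map `f : F₁ → E₁` between Hausdorff locally
convex spaces over `ℝ`, the transpose `fᵗ : (E₁)'_c → (F₁)'_c` is continuous, the induced map
`f ε Id : F₁ ε E₂ → E₁ ε E₂`, `u ↦ u ∘ fᵗ`, is linear and continuous, and it is injective
whenever `f` is injective. -/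
theorem epsProduct_map_left
    (F₁ E₁ E₂ : Type*)
    [AddCommGroup F₁] [Module ℝ F₁] [TopologicalSpace F₁] [IsTopologicalAddGroup F₁]
    [ContinuousSMul ℝ F₁] [LocallyConvexSpace ℝ F₁] [T2Space F₁]
    [AddCommGroup E₁] [Module ℝ E₁] [TopologicalSpace E₁] [IsTopologicalAddGroup E₁]
    [ContinuousSMul ℝ E₁] [LocallyConvexSpace ℝ E₁] [T2Space E₁]
    [AddCommGroup E₂] [Module ℝ E₂] [TopologicalSpace E₂] [IsTopologicalAddGroup E₂]
    [ContinuousSMul ℝ E₂] [LocallyConvexSpace ℝ E₂] [T2Space E₂]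
    (f : F₁ →L[ℝ] E₁) :
    ∃ ft : ArensDual E₁ →L[ℝ] ArensDual F₁,
      (∀ (x' : ArensDual E₁) (y : F₁), (ft x') y = x' (f y)) ∧
      ∃ g : EpsProduct F₁ E₂ →L[ℝ] EpsProduct E₁ E₂,
        (∀ (u : EpsProduct F₁ E₂) (x' : ArensDual E₁), (g u) x' = u (ft x')) ∧
        (Function.Injective f → Function.Injective g) := by
  classical
  -- image condition for absolutely convex compact sets
  have hfimg : ∀ S ∈ {K : Set F₁ | Convex ℝ K ∧ Balanced ℝ K ∧ IsCompact K},
      f '' S ∈ {K : Set E₁ | Convex ℝ K ∧ Balanced ℝ K ∧ IsCompact K} := by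
    rintro S ⟨hc, hbal, hk⟩
    refine ⟨hc.linear_image (f : F₁ →ₗ[ℝ] E₁), ?_, hk.image f.continuous⟩
    intro a ha x hx
    rw [Set.mem_smul_set] at hx
    obtain ⟨z, ⟨y, hy, rfl⟩, rfl⟩ := hx
    exact ⟨a • y, hbal a ha (Set.smul_mem_smul_set hy), (map_smul f a y)⟩
  -- the transpose
  let ft : ArensDual E₁ →L[ℝ] ArensDual F₁ :=
    precompCLM {K : Set E₁ | Convex ℝ K ∧ Balanced ℝ K ∧ IsCompact K}
      {K : Set F₁ | Convex ℝ K ∧ Balanced ℝ K ∧ IsCompact K} f hfimg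
  have hft : ∀ (x' : ArensDual E₁) (y : F₁), (ft x') y = x' (f y) := fun _ _ => rfl
  -- image condition for equicontinuous sets
  have hftimg : ∀ H ∈ {H : Set (ArensDual E₁) | Equicontinuous fun f : H => (f.1 : E₁ → ℝ)},
      (ft '' H) ∈ {H : Set (ArensDual F₁) | Equicontinuous fun f : H => (f.1 : F₁ → ℝ)} := by
    intro H hH
    intro x₀ U hU
    have h1 := hH (f x₀) U hU
    have h2 : Tendsto f (𝓝 x₀) (𝓝 (f x₀)) := f.continuous.tendsto x₀
    filter_upwards [h2.eventually h1] with x hx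
    rintro ⟨w, x', hx', rfl⟩
    exact hx ⟨x', hx'⟩
  -- the induced map
  let g : EpsProduct F₁ E₂ →L[ℝ] EpsProduct E₁ E₂ :=
    precompCLM {H : Set (ArensDual F₁) | Equicontinuous fun f : H => (f.1 : F₁ → ℝ)}
      {H : Set (ArensDual E₁) | Equicontinuous fun f : H => (f.1 : E₁ → ℝ)} ft hftimg
  refine ⟨ft, hft, g, fun _ _ => rfl, ?_⟩
  -- injectivity
  intro hfinj u₁ u₂ hu
  let u : EpsProduct F₁ E₂ := u₁ - u₂
  have hdiff : ∀ x' : ArensDual E₁, u (ft x') = 0 := by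
    intro x'
    have h1 : g u = 0 := by rw [map_sub, hu, sub_self]
    calc u (ft x') = (g u) x' := rfl
    _ = (0 : EpsProduct E₁ E₂) x' := by rw [h1]
    _ = 0 := rfl
  have hzero : ∀ w : ArensDual F₁, u w = 0 := by
    intro w
    by_contra hne
    obtain ⟨z', hz'⟩ := SeparatingDual.exists_ne_zero (R := ℝ) hne
    let u' : ArensDual F₁ →L[ℝ] E₂ := u
    let φ : ArensDual F₁ →L[ℝ] ℝ := z'.comp u'
    obtain ⟨y, hy⟩ := arensDual_dual_eval φ
    have hfy : f y = 0 := by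
      by_contra hfy
      obtain ⟨x', hx'⟩ := SeparatingDual.exists_ne_zero (R := ℝ) hfy
      let x'' : ArensDual E₁ := x'
      have ha : φ (ft x'') = 0 := by
        show z' (u' (ft x'')) = 0
        have : u' (ft x'') = 0 := hdiff x''
        rw [this, map_zero]
      have hb : φ (ft x'') = x' (f y) := hy (ft x'')
      rw [ha] at hb
      exact hx' hb.symm
    have hy0 : y = 0 := hfinj (by rw [hfy, map_zero])
    have hfin : φ w = w y := hy w
    rw [hy0, map_zero] at hfin
    exact hz' hfin
  have huu : u = 0 := by
    apply ContinuousLinearMap.ext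
    intro w
    exact hzero w
  have : u₁ - u₂ = 0 := huu
  exact sub_eq_zero.mp this
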